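/- Let M, K be symmetric positive definite real m×m matrices with Rayleigh quotient bounds c₁ h² ≤ (xᵀMx)/(xᵀx) ≤ c₂ h² and d₁ h² ≤ (xᵀKx)/(xᵀx) ≤ d₂ for all nonzero x, and let β > 0. Then every eigenvalue λ of P^{-1}A that is not equal to 1 satisfies 2β + c₁² h⁴ / d₂² ≤ λ ≤ 2β + c₂² / d₁². -/

import Mathlib

open Matrix

/-- A 3×3 block matrix with square m×m blocks. -/
def blk3 {R : Type*} (m : ℕ)
    (A B C D E F G H I : Matrix (Fin m) (Fin m) R) :
    Matrix (Fin m ⊕ (Fin m ⊕ Fin m)) (Fin m ⊕ (Fin m ⊕ Fin m)) R :=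
  Matrix.of <|
    Sum.elim (fun i => Sum.elim (A i) (Sum.elim (B i) (C i)))
      (Sum.elim (fun i => Sum.elim (D i) (Sum.elim (E i) (F i)))
        (fun i => Sum.elim (G i) (Sum.elim (H i) (I i))))

/-- A block vector with three m-blocks. -/
def vec3 {R : Type*} {m : ℕ} (x y z : Fin m → R) : Fin m ⊕ (Fin m ⊕ Fin m) → R :=
  Sum.elim x (Sum.elim y z)

lemma blk3_mulVec {R : Type*} [CommRing R] {m : ℕ}
    (A B C D E F G H I : Matrix (Fin m) (Fin m) R) (x y z : Fin m → R) :
    (blk3 m A B C D E F G H I) *ᵥ (vec3 x y z) =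
      vec3 (A *ᵥ x + B *ᵥ y + C *ᵥ z) (D *ᵥ x + E *ᵥ y + F *ᵥ z)
        (G *ᵥ x + H *ᵥ y + I *ᵥ z) := by
  funext i
  rcases i with i | i | i <;>
    simp [blk3, vec3, mulVec, dotProduct, Fintype.sum_sum_type, Finset.sum_add_distrib, add_assoc]

lemma vec3_eq {R : Type*} {m : ℕ} (w : Fin m ⊕ (Fin m ⊕ Fin m) → R) :
    w = vec3 (fun i => w (Sum.inl i)) (fun i => w (Sum.inr (Sum.inl i)))
      (fun i => w (Sum.inr (Sum.inr i))) := by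
  funext i; rcases i with i | i | i <;> rfl

lemma vec3_eq_zero {R : Type*} [Zero R] {m : ℕ} {x y z : Fin m → R}
    (hx : x = 0) (hy : y = 0) (hz : z = 0) : vec3 x y z = 0 := by
  subst hx hy hz; funext i; rcases i with i | i | i <;> rfl

lemma quad_map_eq {m : ℕ} (S : Matrix (Fin m) (Fin m) ℝ) (hS : Sᵀ = S) (v : Fin m → ℂ) :
    star v ⬝ᵥ ((S.map Complex.ofReal) *ᵥ v) =
      (((fun i => (v i).re) ⬝ᵥ (S *ᵥ fun i => (v i).re)
        + (fun i => (v i).im) ⬝ᵥ (S *ᵥ fun i => (v i).im) : ℝ) : ℂ) := by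
  have hsym : ∀ i j, S i j = S j i := fun i j => by
    have h2 := congrFun (congrFun hS i) j
    rw [transpose_apply] at h2
    exact h2.symm
  simp only [dotProduct, mulVec, Finset.mul_sum, map_apply, Pi.star_apply]
  apply Complex.ext
  · simp only [Complex.re_sum, Complex.ofReal_re, Complex.mul_re, Complex.mul_im,
      Complex.ofReal_im, RCLike.star_def, Complex.conj_re, Complex.conj_im,
      Complex.add_re]
    rw [← Finset.sum_add_distrib]
    apply Finset.sum_congr rfl; intro i _
    rw [← Finset.sum_add_distrib]
    apply Finset.sum_congr rfl; intro j _
    ring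
  · simp only [Complex.im_sum, Complex.ofReal_im, Complex.mul_re, Complex.mul_im,
      Complex.ofReal_re, RCLike.star_def, Complex.conj_re, Complex.conj_im]
    have key : ∀ i j, (v i).re * (S i j * (v j).im + 0 * (v j).re)
        + -(v i).im * (S i j * (v j).re - 0 * (v j).im)
        = (v i).re * S i j * (v j).im - (v i).im * S i j * (v j).re := by
      intro i j; ring
    calc (∑ i, ∑ j, ((v i).re * (S i j * (v j).im + 0 * (v j).re)
          + -(v i).im * (S i j * (v j).re - 0 * (v j).im)))
        = ∑ i, ∑ j, ((v i).re * S i j * (v j).im - (v i).im * S i j * (v j).re) := by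
          exact Finset.sum_congr rfl fun i _ => Finset.sum_congr rfl fun j _ => key i j
      _ = (∑ i, ∑ j, (v i).re * S i j * (v j).im)
            - (∑ i, ∑ j, (v i).im * S i j * (v j).re) := by
          rw [← Finset.sum_sub_distrib]
          exact Finset.sum_congr rfl fun i _ => Finset.sum_sub_distrib _ _
      _ = 0 := by
          rw [sub_eq_zero, Finset.sum_comm]
          exact Finset.sum_congr rfl fun i _ => Finset.sum_congr rfl fun j _ => by
            rw [hsym j i]; ring

lemma map_conjTranspose {m : ℕ} (S : Matrix (Fin m) (Fin m) ℝ) (hS : Sᵀ = S) :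
    (S.map Complex.ofReal)ᴴ = S.map Complex.ofReal := by
  ext i j
  simp only [conjTranspose_apply, map_apply, RCLike.star_def, Complex.conj_ofReal]
  norm_cast
  have h2 := congrFun (congrFun hS i) j
  rw [transpose_apply] at h2
  exact h2

lemma herm_swap {m : ℕ} (S : Matrix (Fin m) (Fin m) ℝ) (hS : Sᵀ = S) (u v : Fin m → ℂ) :
    star u ⬝ᵥ ((S.map Complex.ofReal) *ᵥ v)
      = starRingEnd ℂ (star v ⬝ᵥ ((S.map Complex.ofReal) *ᵥ u)) := by
  have h1 : starRingEnd ℂ (star v ⬝ᵥ ((S.map Complex.ofReal) *ᵥ u))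
      = star ((S.map Complex.ofReal) *ᵥ u) ⬝ᵥ star (star v) := by
    rw [star_dotProduct_star]; rfl
  rw [h1, star_star, star_mulVec, map_conjTranspose S hS, dotProduct_mulVec]

lemma cs_aux {n : ℕ} (S : Matrix (Fin n) (Fin n) ℝ) (hS : Sᵀ = S)
    (hpos : ∀ u : Fin n → ℝ, 0 ≤ u ⬝ᵥ (S *ᵥ u))
    (u v : Fin n → ℂ) (r t q : ℝ)
    (hr : star u ⬝ᵥ ((S.map Complex.ofReal) *ᵥ v) = (r : ℂ))
    (ht : star u ⬝ᵥ ((S.map Complex.ofReal) *ᵥ u) = (t : ℂ))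
    (hq : star v ⬝ᵥ ((S.map Complex.ofReal) *ᵥ v) = (q : ℂ))
    (hq0 : 0 < q) : r ^ 2 ≤ t * q := by
  set c : ℝ := r / q with hc
  have hswap : star v ⬝ᵥ ((S.map Complex.ofReal) *ᵥ u) = (r : ℂ) := by
    rw [herm_swap S hS, hr, Complex.conj_ofReal]
  have key : star (u - (c : ℂ) • v) ⬝ᵥ ((S.map Complex.ofReal) *ᵥ (u - (c : ℂ) • v))
      = ((t - 2 * c * r + c ^ 2 * q : ℝ) : ℂ) := by
    rw [star_sub, mulVec_sub, mulVec_smul, star_smul]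
    rw [sub_dotProduct, dotProduct_sub, dotProduct_sub]
    rw [dotProduct_smul, dotProduct_smul, smul_dotProduct, smul_dotProduct]
    rw [hr, ht, hq, hswap]
    simp only [smul_eq_mul, star_trivial, RCLike.star_def, Complex.conj_ofReal]
    push_cast
    ring
  have h0 : 0 ≤ t - 2 * c * r + c ^ 2 * q := by
    have hq2 := quad_map_eq S hS (u - (c : ℂ) • v)
    rw [key] at hq2
    have hre := Complex.ofReal_injective hq2
    rw [hre]
    exact add_nonneg (hpos _) (hpos _)
  have h1 : 0 ≤ (t - 2 * c * r + c ^ 2 * q) * q := mul_nonneg h0 hq0.le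
  have h2 : (t - 2 * c * r + c ^ 2 * q) * q = t * q - r ^ 2 := by
    rw [hc]; field_simp; ring
  linarith [h2 ▸ h1]

lemma ray_all {n : ℕ} (S : Matrix (Fin n) (Fin n) ℝ) (α γ : ℝ)
    (hb : ∀ u : Fin n → ℝ, u ≠ 0 →
      α ≤ (u ⬝ᵥ (S *ᵥ u)) / (u ⬝ᵥ u) ∧ (u ⬝ᵥ (S *ᵥ u)) / (u ⬝ᵥ u) ≤ γ) :
    ∀ u : Fin n → ℝ, α * (u ⬝ᵥ u) ≤ u ⬝ᵥ (S *ᵥ u) ∧ u ⬝ᵥ (S *ᵥ u) ≤ γ * (u ⬝ᵥ u) := by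
  intro u
  rcases eq_or_ne u 0 with rfl | hu
  · simp
  · have hpos : 0 < u ⬝ᵥ u := by
      have hnn : 0 ≤ u ⬝ᵥ u := Finset.sum_nonneg fun i _ => mul_self_nonneg (u i)
      rcases lt_or_eq_of_le hnn with h | h
      · exact h
      · exact absurd (dotProduct_self_eq_zero.mp h.symm) hu
    obtain ⟨h1, h2⟩ := hb u hu
    constructor
    · rw [le_div_iff₀ hpos] at h1; linarith [h1]
    · rw [div_le_iff₀ hpos] at h2; linarith [h2]

lemma det_map_ofReal {n : ℕ} (S : Matrix (Fin n) (Fin n) ℝ) :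
    (S.map Complex.ofReal).det = Complex.ofReal S.det := by
  rw [show (S.map Complex.ofReal) = Complex.ofRealHom.mapMatrix S from rfl,
    ← RingHom.map_det]
  rfl

lemma symm_of_posdef {n : ℕ} {S : Matrix (Fin n) (Fin n) ℝ} (hS : S.PosDef) : Sᵀ = S := by
  ext i j
  have h2 := congrFun (congrFun hS.1 i) j
  simpa [conjTranspose_apply] using h2

set_option maxHeartbeats 1000000 in
theorem stmt_7 {m : ℕ} (M K : Matrix (Fin m) (Fin m) ℝ)
    (hM : M.PosDef) (hK : K.PosDef) (β : ℝ) (hβ : 0 < β)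
    (c₁ c₂ d₁ d₂ h : ℝ) (hc₁ : 0 < c₁) (hc₂ : 0 < c₂)
    (hd₁ : 0 < d₁) (hd₂ : 0 < d₂) (hh : 0 < h)
    (hMbound : ∀ x : Fin m → ℝ, x ≠ 0 →
      c₁ * h ^ 2 ≤ (x ⬝ᵥ (M *ᵥ x)) / (x ⬝ᵥ x) ∧
      (x ⬝ᵥ (M *ᵥ x)) / (x ⬝ᵥ x) ≤ c₂ * h ^ 2)
    (hKbound : ∀ x : Fin m → ℝ, x ≠ 0 →
      d₁ * h ^ 2 ≤ (x ⬝ᵥ (K *ᵥ x)) / (x ⬝ᵥ x) ∧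
      (x ⬝ᵥ (K *ᵥ x)) / (x ⬝ᵥ x) ≤ d₂)
    (Mc : Matrix (Fin m) (Fin m) ℂ) (hMc : Mc = M.map Complex.ofReal)
    (Kc : Matrix (Fin m) (Fin m) ℂ) (hKc : Kc = K.map Complex.ofReal)
    (A P : Matrix (Fin m ⊕ (Fin m ⊕ Fin m)) (Fin m ⊕ (Fin m ⊕ Fin m)) ℂ)
    (hA : A = blk3 m ((2 * (β : ℂ)) • Mc) 0 (-Mc) 0 Mc Kc (-Mc) Kc 0)
    (hP : P = blk3 m 0 Kc 0 0 Mc Kc (-Mc) Kc 0)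
    (lam : ℂ) (hlam : lam ≠ 1)
    (heig : ∃ w : Fin m ⊕ (Fin m ⊕ Fin m) → ℂ, w ≠ 0 ∧ (P⁻¹ * A) *ᵥ w = lam • w) :
    lam.im = 0 ∧
      2 * β + c₁ ^ 2 * h ^ 4 / d₂ ^ 2 ≤ lam.re ∧
      lam.re ≤ 2 * β + c₂ ^ 2 / d₁ ^ 2 := by
  obtain ⟨w, hw0, hw⟩ := heig
  have hMsym : Mᵀ = M := symm_of_posdef hM
  have hKsym : Kᵀ = K := symm_of_posdef hK
  -- invertibility of Mc, Kc
  have hdetM : Mc.det ≠ 0 := by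
    rw [hMc, det_map_ofReal]
    simpa using hM.det_pos.ne'
  have hdetK : Kc.det ≠ 0 := by
    rw [hKc, det_map_ofReal]
    simpa using hK.det_pos.ne'
  have hMcinj : ∀ v : Fin m → ℂ, Mc *ᵥ v = 0 → v = 0 := by
    intro v hv
    by_contra hne
    exact hdetM (exists_mulVec_eq_zero_iff.mp ⟨v, hne, hv⟩)
  have hKcinj : ∀ v : Fin m → ℂ, Kc *ᵥ v = 0 → v = 0 := by
    intro v hv
    by_contra hne
    exact hdetK (exists_mulVec_eq_zero_iff.mp ⟨v, hne, hv⟩)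
  -- P invertible
  have hdetP : P.det ≠ 0 := by
    intro h0
    obtain ⟨v, hv0, hPv⟩ := exists_mulVec_eq_zero_iff.mpr h0
    rw [vec3_eq v, hP, blk3_mulVec] at hPv
    have e1 : Kc *ᵥ (fun i => v (Sum.inr (Sum.inl i))) = 0 := by
      funext i
      have := congrFun hPv (Sum.inl i)
      simpa [vec3] using this
    have hy := hKcinj _ e1
    have e2 : Mc *ᵥ (fun i => v (Sum.inr (Sum.inl i)))
        + Kc *ᵥ (fun i => v (Sum.inr (Sum.inr i))) = 0 := by
      funext i
      have := congrFun hPv (Sum.inr (Sum.inl i))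
      simpa [vec3] using this
    have hz := hKcinj _ (by rw [hy] at e2; simpa using e2)
    have e3 : -(Mc *ᵥ (fun i => v (Sum.inl i)))
        + Kc *ᵥ (fun i => v (Sum.inr (Sum.inl i))) = 0 := by
      funext i
      have := congrFun hPv (Sum.inr (Sum.inr i))
      simpa [vec3, neg_mulVec] using this
    have hx : Mc *ᵥ (fun i => v (Sum.inl i)) = 0 := by
      rw [hy] at e3; simpa [neg_eq_zero] using e3
    have hx0 := hMcinj _ hx
    exact hv0 (by rw [vec3_eq v]; exact vec3_eq_zero hx0 hy hz)
  -- convert eigen equation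
  have hAw : A *ᵥ w = lam • (P *ᵥ w) := by
    have hPinv : P * P⁻¹ = 1 := mul_nonsing_inv P (Ne.isUnit hdetP)
    calc A *ᵥ w = (P * (P⁻¹ * A)) *ᵥ w := by rw [← mul_assoc, hPinv, one_mul]
      _ = P *ᵥ ((P⁻¹ * A) *ᵥ w) := by rw [← mulVec_mulVec]
      _ = P *ᵥ (lam • w) := by rw [hw]
      _ = lam • (P *ᵥ w) := by rw [mulVec_smul]
  set x : Fin m → ℂ := fun i => w (Sum.inl i) with hxdef
  set y : Fin m → ℂ := fun i => w (Sum.inr (Sum.inl i)) with hydef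
  set z : Fin m → ℂ := fun i => w (Sum.inr (Sum.inr i)) with hzdef
  rw [vec3_eq w, hA, hP, blk3_mulVec, blk3_mulVec] at hAw
  have e1 : ((2 * (β:ℂ)) • Mc) *ᵥ x + (0 : Matrix _ _ ℂ) *ᵥ y + (-Mc) *ᵥ z
      = lam • ((0 : Matrix _ _ ℂ) *ᵥ x + Kc *ᵥ y + (0 : Matrix _ _ ℂ) *ᵥ z) := by
    funext i
    have := congrFun hAw (Sum.inl i)
    simpa [vec3] using this
  have e2 : (0 : Matrix _ _ ℂ) *ᵥ x + Mc *ᵥ y + Kc *ᵥ z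
      = lam • ((0 : Matrix _ _ ℂ) *ᵥ x + Mc *ᵥ y + Kc *ᵥ z) := by
    funext i
    have := congrFun hAw (Sum.inr (Sum.inl i))
    simpa [vec3] using this
  have e3 : (-Mc) *ᵥ x + Kc *ᵥ y + (0 : Matrix _ _ ℂ) *ᵥ z
      = lam • ((-Mc) *ᵥ x + Kc *ᵥ y + (0 : Matrix _ _ ℂ) *ᵥ z) := by
    funext i
    have := congrFun hAw (Sum.inr (Sum.inr i))
    simpa [vec3] using this
  simp only [zero_mulVec, add_zero, zero_add, neg_mulVec] at e1 e2 e3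
  have hone : (1 : ℂ) - lam ≠ 0 := fun hc => hlam (by linear_combination -hc)
  have e2' : Mc *ᵥ y + Kc *ᵥ z = 0 := by
    have : ((1 : ℂ) - lam) • (Mc *ᵥ y + Kc *ᵥ z) = 0 := by
      rw [sub_smul, one_smul, ← e2, sub_self]
    rcases smul_eq_zero.mp this with hc | hc
    · exact absurd hc hone
    · exact hc
  have e3' : Kc *ᵥ y = Mc *ᵥ x := by
    have h4 : ((1 : ℂ) - lam) • (-(Mc *ᵥ x) + Kc *ᵥ y) = 0 := by
      rw [sub_smul, one_smul, ← e3, sub_self]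
    rcases smul_eq_zero.mp h4 with hc | hc
    · exact absurd hc hone
    · have h5 := neg_add_eq_zero.mp hc
      linear_combination (norm := module) -h5
  have hz : z = ((2 * (β:ℂ)) - lam) • x := by
    apply sub_eq_zero.mp
    apply hMcinj
    rw [mulVec_sub, mulVec_smul]
    have hMz : Mc *ᵥ z = (2 * (β:ℂ)) • (Mc *ᵥ x) - lam • (Mc *ᵥ x) := by
      have h6 : Mc *ᵥ z = (2 * (β:ℂ)) • (Mc *ᵥ x) - lam • (Kc *ᵥ y) := by
        have := e1
        rw [smul_mulVec] at this
        linear_combination (norm := module) -this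
      rw [h6, e3']
    rw [hMz, sub_smul]
    module
  set mu : ℂ := lam - 2 * (β:ℂ) with hmu
  have hMy : Mc *ᵥ y = mu • (Kc *ᵥ x) := by
    have h7 : Kc *ᵥ z = ((2 * (β:ℂ)) - lam) • (Kc *ᵥ x) := by
      rw [hz, mulVec_smul]
    have h8 : Mc *ᵥ y = -(((2 * (β:ℂ)) - lam) • (Kc *ᵥ x)) := by
      rw [← h7]; linear_combination (norm := module) e2'
    rw [h8, hmu]; module
  have hx0 : x ≠ 0 := by
    intro hx
    apply hw0
    have hy0 : y = 0 := by
      apply hKcinj; rw [e3', hx]; simp [mulVec_zero]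
    have hz0 : z = 0 := by rw [hz, hx]; simp
    rw [vec3_eq w]
    exact vec3_eq_zero hx hy0 hz0
  -- quadratic form values
  set xa : Fin m → ℝ := fun i => (x i).re with hxa
  set xb : Fin m → ℝ := fun i => (x i).im with hxb
  set ya : Fin m → ℝ := fun i => (y i).re with hya
  set yb : Fin m → ℝ := fun i => (y i).im with hyb
  set p : ℝ := xa ⬝ᵥ (K *ᵥ xa) + xb ⬝ᵥ (K *ᵥ xb) with hpdef
  set q : ℝ := xa ⬝ᵥ (M *ᵥ xa) + xb ⬝ᵥ (M *ᵥ xb) with hqdef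
  set s : ℝ := ya ⬝ᵥ (K *ᵥ ya) + yb ⬝ᵥ (K *ᵥ yb) with hsdef
  set t : ℝ := ya ⬝ᵥ (M *ᵥ ya) + yb ⬝ᵥ (M *ᵥ yb) with htdef
  have hpx : star x ⬝ᵥ (Kc *ᵥ x) = (p : ℂ) := by rw [hKc]; exact quad_map_eq K hKsym x
  have hqx : star x ⬝ᵥ (Mc *ᵥ x) = (q : ℂ) := by rw [hMc]; exact quad_map_eq M hMsym x
  have hsy : star y ⬝ᵥ (Kc *ᵥ y) = (s : ℂ) := by rw [hKc]; exact quad_map_eq K hKsym y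
  have hty : star y ⬝ᵥ (Mc *ᵥ y) = (t : ℂ) := by rw [hMc]; exact quad_map_eq M hMsym y
  -- Rayleigh bounds
  have hMray := ray_all M (c₁ * h ^ 2) (c₂ * h ^ 2) hMbound
  have hKray := ray_all K (d₁ * h ^ 2) d₂ hKbound
  have dotnn : ∀ (u : Fin m → ℝ), 0 ≤ u ⬝ᵥ u :=
    fun u => Finset.sum_nonneg fun i _ => mul_self_nonneg (u i)
  have Mpos : ∀ u : Fin m → ℝ, 0 ≤ u ⬝ᵥ (M *ᵥ u) := fun u =>
    le_trans (by have := dotnn u; positivity) (hMray u).1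
  have Kpos : ∀ u : Fin m → ℝ, 0 ≤ u ⬝ᵥ (K *ᵥ u) := fun u =>
    le_trans (by have := dotnn u; positivity) (hKray u).1
  set Nx : ℝ := xa ⬝ᵥ xa + xb ⬝ᵥ xb with hNxd
  have hNx0 : 0 < Nx := by
    rcases eq_or_lt_of_le (add_nonneg (dotnn xa) (dotnn xb)) with h0 | h0
    · exfalso
      apply hx0
      have h1 : xa ⬝ᵥ xa = 0 := by
        have := dotnn xa; have := dotnn xb; linarith
      have h2 : xb ⬝ᵥ xb = 0 := by
        have := dotnn xa; have := dotnn xb; linarith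
      funext i
      have h3 := congrFun (dotProduct_self_eq_zero.mp h1) i
      have h4 := congrFun (dotProduct_self_eq_zero.mp h2) i
      exact Complex.ext h3 h4
    · exact h0
  have hq1 : c₁ * h ^ 2 * Nx ≤ q := by
    have a1 := (hMray xa).1; have a2 := (hMray xb).1
    rw [hqdef, hNxd]; rw [mul_add]; exact add_le_add a1 a2
  have hq2 : q ≤ c₂ * h ^ 2 * Nx := by
    have a1 := (hMray xa).2; have a2 := (hMray xb).2
    rw [hqdef, hNxd]; rw [mul_add]; exact add_le_add a1 a2
  have hp1 : d₁ * h ^ 2 * Nx ≤ p := by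
    have a1 := (hKray xa).1; have a2 := (hKray xb).1
    rw [hpdef, hNxd]; rw [mul_add]; exact add_le_add a1 a2
  have hp2 : p ≤ d₂ * Nx := by
    have a1 := (hKray xa).2; have a2 := (hKray xb).2
    rw [hpdef, hNxd]; rw [mul_add]; exact add_le_add a1 a2
  have hp0 : 0 < p := lt_of_lt_of_le (by positivity) hp1
  have hq0 : 0 < q := lt_of_lt_of_le (by positivity) hq1
  -- mu is real, = s / p
  have hxy1 : star x ⬝ᵥ (Mc *ᵥ y) = mu * (p : ℂ) := by
    rw [hMy, dotProduct_smul, hpx, smul_eq_mul]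
  have hxy2 : star x ⬝ᵥ (Mc *ᵥ y) = (s : ℂ) := by
    calc star x ⬝ᵥ (Mc *ᵥ y)
        = starRingEnd ℂ (star y ⬝ᵥ (Mc *ᵥ x)) := by rw [hMc]; exact herm_swap M hMsym x y
      _ = starRingEnd ℂ (star y ⬝ᵥ (Kc *ᵥ y)) := by rw [e3']
      _ = (s : ℂ) := by rw [hsy, Complex.conj_ofReal]
  have hmups : mu * (p : ℂ) = (s : ℂ) := by rw [← hxy1, hxy2]
  have hpC : (p : ℂ) ≠ 0 := by exact_mod_cast hp0.ne'
  have hmu_eq : mu = ((s / p : ℝ) : ℂ) := by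
    rw [Complex.ofReal_div, eq_div_iff hpC]; exact hmups
  -- relation t = (s/p) q
  have hxKy : star x ⬝ᵥ (Kc *ᵥ y) = (q : ℂ) := by rw [e3', hqx]
  have hyKx : star y ⬝ᵥ (Kc *ᵥ x) = (q : ℂ) := by
    rw [hKc]
    rw [herm_swap K hKsym y x, ← hKc, hxKy, Complex.conj_ofReal]
  have hyMy : (t : ℂ) = mu * (q : ℂ) := by
    rw [← hty, hMy, dotProduct_smul, hyKx, smul_eq_mul]
  have htq : t = s / p * q := by
    rw [hmu_eq] at hyMy
    exact_mod_cast hyMy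
  -- Cauchy-Schwarz inequalities
  have hy0 : y ≠ 0 := by
    intro h0
    rw [h0, mulVec_zero, dotProduct_zero] at hxKy
    exact hq0.ne' (by exact_mod_cast hxKy.symm)
  set Ny : ℝ := ya ⬝ᵥ ya + yb ⬝ᵥ yb with hNyd
  have hNy0 : 0 < Ny := by
    rcases eq_or_lt_of_le (add_nonneg (dotnn ya) (dotnn yb)) with h0 | h0
    · exfalso
      apply hy0
      have h1 : ya ⬝ᵥ ya = 0 := by
        have := dotnn ya; have := dotnn yb; linarith
      have h2 : yb ⬝ᵥ yb = 0 := by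
        have := dotnn ya; have := dotnn yb; linarith
      funext i
      have h3 := congrFun (dotProduct_self_eq_zero.mp h1) i
      have h4 := congrFun (dotProduct_self_eq_zero.mp h2) i
      exact Complex.ext h3 h4
    · exact h0
  have hs1 : d₁ * h ^ 2 * Ny ≤ s := by
    have a1 := (hKray ya).1; have a2 := (hKray yb).1
    rw [hsdef, hNyd]; rw [mul_add]; exact add_le_add a1 a2
  have hs0 : 0 < s := lt_of_lt_of_le (by positivity) hs1
  have hcsK : q ^ 2 ≤ p * s := by
    apply cs_aux K hKsym Kpos x y q p s
    · rw [← hKc]; exact hxKy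
    · rw [← hKc]; exact hpx
    · rw [← hKc]; exact hsy
    · exact hs0
  have hyMx : star y ⬝ᵥ (Mc *ᵥ x) = (s : ℂ) := by rw [← e3', hsy]
  have hcsM : s ^ 2 ≤ t * q := by
    apply cs_aux M hMsym Mpos y x s t q
    · rw [← hMc]; exact hyMx
    · rw [← hMc]; exact hty
    · rw [← hMc]; exact hqx
    · exact hq0
  -- lam in terms of s/p
  have hlam_eq : lam = ((2 * β + s / p : ℝ) : ℂ) := by
    have : lam = mu + 2 * (β : ℂ) := by rw [hmu]; ring
    rw [this, hmu_eq]; push_cast; ring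
  have hsp_lower : c₁ ^ 2 * h ^ 4 / d₂ ^ 2 ≤ s / p := by
    rw [div_le_div_iff₀ (by positivity) hp0]
    nlinarith [mul_le_mul hq1 hq1 (by positivity) hq0.le, hcsK,
      mul_le_mul hp2 hp2 hp0.le (by positivity), hNx0, hp0, hs0,
      mul_pos hNx0 hNx0, sq_nonneg (c₁ * h ^ 2 * Nx)]
  have hsp_upper : s / p ≤ c₂ ^ 2 / d₁ ^ 2 := by
    have hspq : s * p ≤ q ^ 2 := by
      have h1 : s ^ 2 ≤ s / p * q * q := htq ▸ hcsM
      have h2 : s ^ 2 * p ≤ s * q ^ 2 := by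
        have := mul_le_mul_of_nonneg_right h1 hp0.le
        calc s ^ 2 * p ≤ s / p * q * q * p := this
          _ = s * q ^ 2 * (p / p) := by ring
          _ = s * q ^ 2 := by rw [div_self hp0.ne']; ring
      nlinarith [hs0, h2]
    rw [div_le_div_iff₀ hp0 (by positivity)]
    nlinarith [mul_le_mul hq2 hq2 hq0.le (by positivity), hspq,
      mul_le_mul hp1 hp1 (by positivity) hp0.le, hNx0, hp0, hs0,
      mul_pos hNx0 hNx0]
  refine ⟨?_, ?_, ?_⟩
  · rw [hlam_eq]; simp
  · rw [hlam_eq]; simp only [Complex.ofReal_re]; linarith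
  · rw [hlam_eq]; simp only [Complex.ofReal_re]; linarith
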